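/- Let 𝕏 be a Banach space, S ⊂ 𝕏 an infinite bounded set that is uniformly discrete (i.e., there is δ > 0 such that ‖x − y‖ ≥ δ for all distinct x, y ∈ S), and F ⊂ 𝕏 a finite-dimensional subspace. Then for every ε > 0 there exist x, y ∈ S with x ≠ y such that for every scalar b and every z ∈ F, ‖z‖ ≤ (1 + ε)·‖z + b(x − y)‖. -/

import Mathlib

open Metric Set Bornology

/-- separation lemma for bounded uniformly discrete sets. -/
theorem statement18 {𝕜 : Type*} [RCLike 𝕜] {X : Type*} [NormedAddCommGroup X]
    [NormedSpace 𝕜 X] [CompleteSpace X]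
    (S : Set X) (hSinf : S.Infinite) (hSbdd : Bornology.IsBounded S)
    (δ : ℝ) (hδ : 0 < δ) (hsep : ∀ x ∈ S, ∀ y ∈ S, x ≠ y → δ ≤ ‖x - y‖)
    (F : Submodule 𝕜 X) [FiniteDimensional 𝕜 F]
    (ε : ℝ) (hε : 0 < ε) :
    ∃ x ∈ S, ∃ y ∈ S, x ≠ y ∧
      ∀ b : 𝕜, ∀ z ∈ F, ‖z‖ ≤ (1 + ε) * ‖z + b • (x - y)‖ := by
  classical
  set η : ℝ := ε / (3 * (1 + ε)) with hη_def
  have hε1 : (0:ℝ) < 1 + ε := by linarith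
  have hη : 0 < η := by positivity
  have hη1 : (1 + ε) * (1 - 3 * η) = 1 := by
    field_simp [hη_def]
    have h3 : η * (3 * (1 + ε)) = ε := by rw [hη_def]; exact div_mul_cancel₀ _ (by positivity)
    linarith
  -- finite η-net of the unit sphere of F
  have hcomp : IsCompact (sphere (0 : F) 1) := isCompact_sphere 0 1
  obtain ⟨t, hts, htfin, htcover⟩ :=
    hcomp.elim_finite_subcover_image (b := sphere (0:F) 1)
      (c := fun c => ball c η) (fun c _ => isOpen_ball)
      (fun w hw => mem_biUnion hw (mem_ball_self hη))
  haveI := htfin.fintype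
  -- norming functionals for net points
  have hfex : ∀ c : t, ∃ f : X →L[𝕜] 𝕜, ‖f‖ = 1 ∧ f ((c : F) : X) = (‖((c : F) : X)‖ : 𝕜) := by
    intro c
    apply exists_dual_vector 𝕜
    have hc1 : ‖(c : F)‖ = 1 := by simpa using hts c.2
    have : ‖((c : F) : X)‖ = 1 := hc1
    intro h
    rw [h] at this
    simp at this
  choose f hf1 hf2 using hfex
  -- the map into a finite-dimensional space
  set Φ : X → (t → 𝕜) := fun x c => f c x with hΦ
  have hΦlip : LipschitzWith 1 Φ := by
    apply LipschitzWith.of_dist_le_mul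
    intro x y
    rw [NNReal.coe_one, one_mul, dist_pi_le_iff dist_nonneg]
    intro c
    have : f c x - f c y = f c (x - y) := by rw [map_sub]
    rw [dist_eq_norm, this]
    calc ‖f c (x - y)‖ ≤ ‖f c‖ * ‖x - y‖ := (f c).le_opNorm _
      _ = dist x y := by rw [hf1, one_mul, dist_eq_norm]
  have htb : TotallyBounded (Φ '' S) :=
    (hΦlip.isBounded_image hSbdd).isCompact_closure.totallyBounded.subset subset_closure
  obtain ⟨C, hCfin, hCcover⟩ := (totallyBounded_iff.mp htb) (η * δ / 2) (by positivity)
  -- pigeonhole: two points of S with close Φ-images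
  have hmap : ∀ x ∈ S, ∃ c ∈ C, Φ x ∈ ball c (η * δ / 2) := by
    intro x hx
    have := hCcover (mem_image_of_mem Φ hx)
    simpa using this
  have hSne : S.Nonempty := hSinf.nonempty
  obtain ⟨x₀, hx₀⟩ := hSne
  obtain ⟨c₀, hc₀, -⟩ := hmap x₀ hx₀
  set g : X → (t → 𝕜) := fun x =>
    if h : ∃ c ∈ C, Φ x ∈ ball c (η * δ / 2) then h.choose else c₀ with hg_def
  have hgmem : ∀ x ∈ S, g x ∈ C ∧ Φ x ∈ ball (g x) (η * δ / 2) := by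
    intro x hx
    have h := hmap x hx
    rw [hg_def]
    simp only [dif_pos h]
    exact ⟨h.choose_spec.1, h.choose_spec.2⟩
  obtain ⟨x, hx, y, hy, hxy, hgeq⟩ :=
    hSinf.exists_ne_map_eq_of_mapsTo (f := g) (fun x hx => (hgmem x hx).1) hCfin
  refine ⟨x, hx, y, hy, hxy, ?_⟩
  set v : X := x - y with hv_def
  have hδv : δ ≤ ‖v‖ := hsep x hx y hy hxy
  -- the coordinates of Φ x and Φ y are close
  have hΦclose : dist (Φ x) (Φ y) < η * δ := by
    calc dist (Φ x) (Φ y) ≤ dist (Φ x) (g x) + dist (g x) (Φ y) := dist_triangle _ _ _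
      _ < η * δ / 2 + η * δ / 2 := by
          apply add_lt_add
          · exact mem_ball.mp (hgmem x hx).2
          · rw [dist_comm, hgeq]; exact mem_ball.mp (hgmem y hy).2
      _ = η * δ := by ring
  have hfv : ∀ c : t, ‖f c v‖ ≤ η * ‖v‖ := by
    intro c
    have h1 : ‖f c x - f c y‖ ≤ dist (Φ x) (Φ y) := by
      have := dist_le_pi_dist (Φ x) (Φ y) c
      rwa [dist_eq_norm] at this
    have h2 : f c v = f c x - f c y := by rw [hv_def, map_sub]
    have h3 : ‖f c v‖ < η * δ := by rw [h2]; exact lt_of_le_of_lt h1 hΦclose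
    have h4 : η * δ ≤ η * ‖v‖ := by nlinarith
    linarith
  -- key estimate for unit vectors of F
  have key : ∀ w : X, w ∈ F → ‖w‖ = 1 → ∀ a : 𝕜, 1 ≤ (1 + ε) * ‖w + a • v‖ := by
    intro w hwF hw a
    have hwsph : (⟨w, hwF⟩ : F) ∈ sphere (0 : F) 1 := by
      simp only [mem_sphere_iff_norm, sub_zero]
      exact hw
    obtain ⟨c, hct, hc⟩ := mem_iUnion₂.mp (htcover hwsph)
    set c' : t := ⟨c, hct⟩ with hc'_def
    have hwc : ‖w - ((c : F) : X)‖ < η := by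
      have h := mem_ball_iff_norm.mp hc
      have : ‖(⟨w, hwF⟩ : F) - c‖ = ‖w - ((c : F) : X)‖ := rfl
      rwa [this] at h
    have hcnorm : ‖((c : F) : X)‖ = 1 := by simpa using hts hct
    by_cases hb : ‖a‖ * ‖v‖ ≤ 2
    · -- use the norming functional
      have h1 : ‖f c' (w + a • v)‖ ≤ ‖w + a • v‖ := by
        calc ‖f c' (w + a • v)‖ ≤ ‖f c'‖ * ‖w + a • v‖ := (f c').le_opNorm _
          _ = ‖w + a • v‖ := by rw [hf1, one_mul]
      have e1 : f c' (w + a • v)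
          = f c' ((c' : F) : X) + f c' (w - ((c' : F) : X)) + a * f c' v := by
        rw [map_add, map_sub, (f c').map_smul]
        ring_nf
      have e2 : ‖f c' ((c' : F) : X)‖ = 1 := by
        rw [hf2]
        simp only [hc'_def]
        rw [hcnorm]
        simp
      have e3 : ‖f c' (w - ((c' : F) : X))‖ < η := by
        calc ‖f c' (w - ((c' : F) : X))‖ ≤ ‖f c'‖ * ‖w - ((c' : F) : X)‖ :=
              (f c').le_opNorm _
          _ = ‖w - ((c : F) : X)‖ := by rw [hf1, one_mul]
          _ < η := hwc
      have e4 : ‖a * f c' v‖ ≤ 2 * η := by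
        rw [norm_mul]
        have := hfv c'
        have hδ' : 0 < ‖v‖ := lt_of_lt_of_le hδ hδv
        have hη2 : ‖a‖ * ‖f c' v‖ ≤ ‖a‖ * (η * ‖v‖) :=
          mul_le_mul_of_nonneg_left this (norm_nonneg a)
        nlinarith [norm_nonneg a]
      have h2 : 1 - 3 * η ≤ ‖f c' (w + a • v)‖ := by
        have := norm_sub_norm_le (f c' ((c' : F) : X))
          (-(f c' (w - ((c' : F) : X)) + a * f c' v))
        have e5 : f c' ((c' : F) : X) - -(f c' (w - ((c' : F) : X)) + a * f c' v)
            = f c' (w + a • v) := by rw [e1]; ring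
        rw [e5, e2] at this
        have e6 : ‖-(f c' (w - ((c' : F) : X)) + a * f c' v)‖
            ≤ ‖f c' (w - ((c' : F) : X))‖ + ‖a * f c' v‖ := by
          rw [norm_neg]; exact norm_add_le _ _
        linarith
      have h3 : 1 - 3 * η ≤ ‖w + a • v‖ := le_trans h2 h1
      calc (1:ℝ) = (1 + ε) * (1 - 3 * η) := hη1.symm
        _ ≤ (1 + ε) * ‖w + a • v‖ := by
            apply mul_le_mul_of_nonneg_left h3 (le_of_lt hε1)
    · -- a • v is large
      push_neg at hb
      have h1 : ‖a • v‖ - ‖w‖ ≤ ‖w + a • v‖ := by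
        have := norm_sub_norm_le (a • v) (-w)
        have e : a • v - -w = w + a • v := by abel
        rw [e, norm_neg] at this
        linarith
      have h2 : 1 ≤ ‖w + a • v‖ := by
        rw [norm_smul] at h1
        rw [hw] at h1
        linarith
      nlinarith
  -- conclude by scaling
  intro b z hz
  rcases eq_or_ne z 0 with rfl | hz0
  · simp only [norm_zero]
    positivity
  · have hnz : (0:ℝ) < ‖z‖ := norm_pos_iff.mpr hz0
    set u : X := ((‖z‖ : 𝕜))⁻¹ • z with hu_def
    have huF : u ∈ F := F.smul_mem _ hz
    have hknorm : ‖(‖z‖ : 𝕜)‖ = ‖z‖ := by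
      rw [RCLike.norm_ofReal, abs_of_pos hnz]
    have hu1 : ‖u‖ = 1 := by
      rw [hu_def, norm_smul, norm_inv, hknorm]
      field_simp
    have hzk : (‖z‖ : 𝕜) ≠ 0 := by
      simpa using hnz.ne'
    have := key u huF hu1 ((‖z‖ : 𝕜)⁻¹ * b)
    have heq : u + ((‖z‖ : 𝕜)⁻¹ * b) • v = ((‖z‖ : 𝕜))⁻¹ • (z + b • v) := by
      rw [smul_add, hu_def, mul_smul]
    rw [heq, norm_smul, norm_inv, hknorm] at this
    have h2 : ‖z‖ * 1 ≤ ‖z‖ * ((1 + ε) * (‖z‖⁻¹ * ‖z + b • v‖)) :=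
      mul_le_mul_of_nonneg_left this (le_of_lt hnz)
    rw [mul_one] at h2
    calc ‖z‖ ≤ ‖z‖ * ((1 + ε) * (‖z‖⁻¹ * ‖z + b • v‖)) := h2
      _ = (1 + ε) * ‖z + b • v‖ := by field_simp
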